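/- Let G be a connected graph and H a connected induced subgraph of G such that every path in G between two distinct vertices of H is entirely contained in H. Then for every vertex u of G not in H there exists a unique vertex v_H(u) of H such that every path in G from u to any vertex of H passes through v_H(u). -/

import Mathlib

lemma exists_first_gate {V : Type*} {G : SimpleGraph V} (S : Set V) :
    ∀ {u w : V} (p : G.Walk u w), u ∉ S → w ∈ S → p.IsPath →
    ∃ v, ∃ q : G.Walk u v, v ∈ S ∧ (∀ x ∈ q.support, x ≠ v → x ∉ S) ∧
      q.support ⊆ p.support ∧ q.edges ⊆ p.edges ∧ q.IsPath := by
  intro u w p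
  induction p with
  | nil => intro hu hw _; exact absurd hw hu
  | @cons a b c h r ih =>
    intro hu hw hp
    by_cases hb : b ∈ S
    · refine ⟨b, SimpleGraph.Walk.cons h SimpleGraph.Walk.nil, hb, ?_, ?_, ?_, ?_⟩
      · intro x hx hxb
        simp only [SimpleGraph.Walk.support_cons, SimpleGraph.Walk.support_nil,
          List.mem_cons, List.mem_singleton] at hx
        rcases hx with rfl | rfl | h'
        · exact hu
        · exact absurd rfl hxb
        · exact absurd h' List.not_mem_nil
      · intro x hx
        simp only [SimpleGraph.Walk.support_cons, SimpleGraph.Walk.support_nil,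
          List.mem_cons, List.mem_singleton] at hx ⊢
        rcases hx with rfl | rfl | h'
        · exact Or.inl rfl
        · exact Or.inr (SimpleGraph.Walk.start_mem_support r)
        · exact absurd h' List.not_mem_nil
      · simp
      · simp [h.ne]
    · obtain ⟨v, q, hvS, hq, hsub, hesub, hqp⟩ := ih hb hw hp.of_cons
      refine ⟨v, SimpleGraph.Walk.cons h q, hvS, ?_, ?_, ?_, ?_⟩
      · intro x hx hxv
        simp only [SimpleGraph.Walk.support_cons, List.mem_cons] at hx
        rcases hx with rfl | hx
        · exact hu
        · exact hq x hx hxv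
      · intro x hx
        simp only [SimpleGraph.Walk.support_cons, List.mem_cons] at hx ⊢
        rcases hx with rfl | hx
        · exact Or.inl rfl
        · exact Or.inr (hsub hx)
      · intro e he
        simp only [SimpleGraph.Walk.edges_cons, List.mem_cons] at he ⊢
        rcases he with rfl | he
        · exact Or.inl rfl
        · exact Or.inr (hesub he)
      · rw [SimpleGraph.Walk.cons_isPath_iff]
        refine ⟨hqp, fun hmem => ?_⟩
        exact ((SimpleGraph.Walk.cons_isPath_iff h r).mp hp).2 (hsub hmem)

/-- If `H` (with vertex set `S`) is a connected induced subgraph of a connected graph `G`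
such that every path in `G` between two distinct vertices of `S` is entirely contained
in `S`, then every vertex `u ∉ S` has a unique gate vertex `v ∈ S` through which every
path from `u` to a vertex of `S` passes. -/
theorem special_subgraph_gate {V : Type*} [Fintype V] (G : SimpleGraph V)
    (hG : G.Connected) (S : Set V) (hS : (G.induce S).Connected)
    (hspec : ∀ a b : V, a ∈ S → b ∈ S → a ≠ b →
      ∀ (p : G.Walk a b), p.IsPath → ∀ x ∈ p.support, x ∈ S)
    (u : V) (hu : u ∉ S) :
    ∃! v : V, v ∈ S ∧ ∀ w ∈ S, ∀ (p : G.Walk u w), p.IsPath → v ∈ p.support := by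
  classical
  obtain ⟨⟨w₀, hw₀⟩⟩ := hS.nonempty
  obtain ⟨p₀⟩ := hG u w₀
  obtain ⟨v, q, hvS, hq, _, _, hqP⟩ :=
    exists_first_gate S p₀.bypass hu hw₀ p₀.bypass_isPath
  have key : ∀ w ∈ S, ∀ (r : G.Walk u w), r.IsPath → v ∈ r.support := by
    intro w hw r hr
    by_contra hv
    obtain ⟨v', q', hv'S, hq', hsub', hesub', _⟩ := exists_first_gate S r hu hw hr
    have hv'q : v' ∈ q'.support := q'.end_mem_support
    have hne : v' ≠ v := fun e => hv (e ▸ hsub' hv'q)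
    set W : G.Walk v v' := q.reverse.append q' with hW
    have hπP : W.bypass.IsPath := W.bypass_isPath
    have hπS : ∀ x ∈ W.bypass.support, x ∈ S :=
      hspec v v' hvS hv'S hne.symm W.bypass hπP
    have hπW : ∀ x ∈ W.bypass.support, x ∈ q.support ∨ x ∈ q'.support := by
      intro x hx
      have := W.support_bypass_subset hx
      rw [hW, SimpleGraph.Walk.mem_support_append_iff,
        SimpleGraph.Walk.support_reverse, List.mem_reverse] at this
      exact this
    -- analyze π
    cases hπ : W.bypass with
    | nil => exact hne rfl
    | @cons _ x _ h' π' =>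
      have hxsup : x ∈ W.bypass.support := by
        rw [hπ]; simp [SimpleGraph.Walk.support_cons]
      have hxne : x ≠ v := by
        intro e
        have : v ∈ π'.support := e ▸ π'.start_mem_support
        rw [hπ, SimpleGraph.Walk.cons_isPath_iff] at hπP
        exact hπP.2 this
      have hxv' : x = v' := by
        rcases hπW x hxsup with hx | hx
        · exact absurd (hπS x hxsup) (hq x hx hxne)
        · by_contra hne2
          exact absurd (hπS x hxsup) (hq' x hx hne2)
      subst hxv'
      have hedge : s(v, x) ∈ W.edges := by
        apply W.edges_bypass_subset
        rw [hπ, SimpleGraph.Walk.edges_cons]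
        exact List.mem_cons_self
      rw [hW, SimpleGraph.Walk.edges_append, List.mem_append,
        SimpleGraph.Walk.edges_reverse, List.mem_reverse] at hedge
      rcases hedge with he | he
      · have : x ∈ q.support := SimpleGraph.Walk.snd_mem_support_of_mem_edges q he
        exact absurd hv'S (hq x this hne)
      · have : v ∈ q'.support := SimpleGraph.Walk.fst_mem_support_of_mem_edges q' he
        exact hv (hsub' this)
  refine ⟨v, ⟨hvS, key⟩, ?_⟩
  rintro y ⟨hyS, hy⟩
  have : y ∈ q.support := hy v hvS q hqP
  by_contra hne
  exact absurd hyS (hq y this hne)
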